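/- For 0 < q < 1, the sequence sₙ = q^{−n(n+1)/2} is a Stieltjes moment sequence that is S-indeterminate; in fact the densities v_c(x) for c = 1 give one solution and the discrete measure supported on {q^{−k}} obtained from the q-analysis gives another, so at least two distinct measures on (0,∞) share the moments q^{−n(n+1)/2}. -/

import Mathlib

open MeasureTheory Real

/-- The log-normal type density `v_c` associated with `q`. -/
noncomputable def vDensity (q c x : ℝ) : ℝ :=
  q ^ (c / 8) / Real.sqrt (2 * Real.pi * Real.log (1 / q ^ c)) *
    x ^ (-(1 / 2) : ℝ) *
    Real.exp (-(Real.log x) ^ 2 / (2 * Real.log (1 / q ^ c)))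

/-- `μ` is a measure on `[0,∞)` representing the Stieltjes moment sequence `s`. -/
def IsStieltjesRepr (μ : Measure ℝ) (s : ℕ → ℝ) : Prop :=
  μ (Set.Iio 0) = 0 ∧
    ∀ n : ℕ, Integrable (fun x => x ^ n) μ ∧ s n = ∫ x, x ^ n ∂μ

open Set

/-- Change of variables x = exp t for integrals over (0,∞). -/
lemma subst_exp_int (g : ℝ → ℝ) :
    (IntegrableOn g (Set.Ioi (0:ℝ)) ↔ Integrable fun t => Real.exp t * g (Real.exp t)) ∧
    ∫ x in Set.Ioi (0:ℝ), g x = ∫ t, Real.exp t * g (Real.exp t) := by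
  have himg : Real.exp '' Set.univ = Set.Ioi 0 := by
    rw [Set.image_univ, Real.range_exp]
  have hderiv : ∀ x ∈ Set.univ, HasDerivWithinAt Real.exp (Real.exp x) Set.univ x :=
    fun x _ => (Real.hasDerivAt_exp x).hasDerivWithinAt
  have hinj : Set.InjOn Real.exp Set.univ := Real.exp_injective.injOn
  constructor
  · rw [← himg,
      integrableOn_image_iff_integrableOn_abs_deriv_smul MeasurableSet.univ hderiv hinj]
    simp [IntegrableOn, Real.abs_exp, smul_eq_mul]
  · rw [← himg, integral_image_eq_integral_abs_deriv_smul MeasurableSet.univ hderiv hinj]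
    simp [Real.abs_exp, smul_eq_mul]

lemma gauss_complex {L : ℝ} (hL : 0 < L) (c : ℂ) :
    (Integrable fun t : ℝ => Complex.exp (-(t:ℂ)^2/(2*L) + c*t)) ∧
    ∫ t : ℝ, Complex.exp (-(t:ℂ)^2/(2*L) + c*t)
      = (Real.sqrt (2*Real.pi*L) : ℂ) * Complex.exp (c^2*L/2) := by
  have hL0 : (L:ℂ) ≠ 0 := by exact_mod_cast hL.ne'
  set b : ℂ := ((-(1/(2*L)) : ℝ) : ℂ) with hb_def
  have hb : b.re < 0 := by
    simp only [hb_def, Complex.ofReal_re]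
    have : 0 < 1/(2*L) := by positivity
    linarith
  have hb0 : b ≠ 0 := by
    intro h
    rw [h] at hb; simp at hb
  have hexp : ∀ t : ℝ, -(t:ℂ)^2/(2*(L:ℂ)) + c*t = b*(t:ℂ)^2 + c*(t:ℂ) + 0 := by
    intro t
    rw [hb_def]
    push_cast
    field_simp
    ring
  constructor
  · refine (integrable_cexp_quadratic' hb c 0).congr ?_
    filter_upwards with t using by rw [hexp t]
  · calc ∫ t : ℝ, Complex.exp (-(t:ℂ)^2/(2*L) + c*t)
        = ∫ t : ℝ, Complex.exp (b*(t:ℂ)^2 + c*(t:ℂ) + 0) := by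
          congr 1; funext t; rw [hexp t]
      _ = (↑Real.pi / -b) ^ (1/2 : ℂ) * Complex.exp (0 - c^2 / (4*b)) :=
          integral_cexp_quadratic hb c 0
      _ = (Real.sqrt (2*Real.pi*L) : ℂ) * Complex.exp (c^2*L/2) := by
          congr 1
          · have h1 : (↑Real.pi / -b) = ((2*Real.pi*L : ℝ) : ℂ) := by
              rw [hb_def]
              push_cast
              field_simp
            rw [h1]
            rw [show ((1:ℂ)/2) = ((1/2 : ℝ) : ℂ) by norm_num]
            rw [← Complex.ofReal_cpow (by positivity)]
            rw [← Real.sqrt_eq_rpow]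
          · congr 1
            rw [hb_def]
            push_cast
            field_simp
            ring

lemma gauss_real {L : ℝ} (hL : 0 < L) (a : ℝ) :
    (Integrable fun t : ℝ => Real.exp (a*t - t^2/(2*L))) ∧
    ∫ t : ℝ, Real.exp (a*t - t^2/(2*L)) = Real.sqrt (2*Real.pi*L) * Real.exp (a^2*L/2) := by
  have h : ∀ t : ℝ, -(t:ℂ)^2/(2*(L:ℂ)) + (a:ℂ)*(t:ℝ)
      = ((a*t - t^2/(2*L) : ℝ) : ℂ) := by
    intro t; push_cast; ring
  have key : ∀ t : ℝ, ((Real.exp (a*t - t^2/(2*L)) : ℝ) : ℂ)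
      = Complex.exp (-(t:ℂ)^2/(2*L) + (a:ℂ)*t) := by
    intro t; rw [h t]; exact Complex.ofReal_exp _
  have h1 := (gauss_complex hL (a:ℂ)).1
  have h2 := (gauss_complex hL (a:ℂ)).2
  constructor
  · exact h1.re.congr (Filter.Eventually.of_forall fun t => by
      show (Complex.exp _).re = _
      rw [h t]; exact Complex.exp_ofReal_re _)
  · have hre : ∀ t : ℝ, (Complex.exp (-(t:ℂ)^2/(2*L) + (a:ℂ)*t)).re
        = Real.exp (a*t - t^2/(2*L)) := by
      intro t; rw [h t]; exact Complex.exp_ofReal_re _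
    have h3 : ∫ t : ℝ, Real.exp (a*t - t^2/(2*L))
        = ∫ t : ℝ, (Complex.exp (-(t:ℂ)^2/(2*L) + (a:ℂ)*t)).re := by
      congr 1; funext t; rw [hre t]
    have h4 : ∫ t : ℝ, (Complex.exp (-(t:ℂ)^2/(2*L) + (a:ℂ)*t)).re
        = (∫ t : ℝ, Complex.exp (-(t:ℂ)^2/(2*L) + (a:ℂ)*t)).re := integral_re h1
    rw [h3, h4, h2, show ((a:ℂ))^2*(L:ℂ)/2 = ((a^2*L/2 : ℝ) : ℂ) by push_cast; ring,
      ← Complex.ofReal_exp, ← Complex.ofReal_mul, Complex.ofReal_re]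

lemma gauss_sin {L : ℝ} (hL : 0 < L) (a ω : ℝ) :
    (Integrable fun t : ℝ => Real.exp (a*t - t^2/(2*L)) * Real.sin (ω*t)) ∧
    ∫ t : ℝ, Real.exp (a*t - t^2/(2*L)) * Real.sin (ω*t)
      = Real.sqrt (2*Real.pi*L) * Real.exp ((a^2-ω^2)*L/2) * Real.sin (a*ω*L) := by
  set c : ℂ := (a:ℂ) + (ω:ℂ)*Complex.I with hc
  have key : ∀ t : ℝ, -(t:ℂ)^2/(2*(L:ℂ)) + c*t
      = ((a*t - t^2/(2*L) : ℝ) : ℂ) + ((ω*t : ℝ) : ℂ)*Complex.I := by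
    intro t; rw [hc]; push_cast; ring
  have him : ∀ t : ℝ, (Complex.exp (-(t:ℂ)^2/(2*L) + c*t)).im
      = Real.exp (a*t - t^2/(2*L)) * Real.sin (ω*t) := by
    intro t
    rw [key t, Complex.exp_im]
    simp only [Complex.add_re, Complex.add_im, Complex.ofReal_re, Complex.ofReal_im,
      Complex.mul_re, Complex.mul_im, Complex.I_re, Complex.I_im, mul_zero, zero_mul,
      mul_one, sub_zero, add_zero, zero_add, zero_sub, neg_zero]
  have h1 := (gauss_complex hL c).1
  have h2 := (gauss_complex hL c).2
  constructor
  · exact h1.im.congr (Filter.Eventually.of_forall fun t => him t)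
  · have h3 : ∫ t : ℝ, Real.exp (a*t - t^2/(2*L)) * Real.sin (ω*t)
        = ∫ t : ℝ, (Complex.exp (-(t:ℂ)^2/(2*L) + c*t)).im := by
      congr 1; funext t; rw [him t]
    have h4 : ∫ t : ℝ, (Complex.exp (-(t:ℂ)^2/(2*L) + c*t)).im
        = (∫ t : ℝ, Complex.exp (-(t:ℂ)^2/(2*L) + c*t)).im := integral_im h1
    rw [h3, h4, h2]
    have hc2 : c^2*(L:ℂ)/2 = ((a^2-ω^2)*L/2 : ℝ) + ((a*ω*L : ℝ) : ℂ)*Complex.I := by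
      rw [hc]; push_cast; ring_nf; rw [Complex.I_sq]; ring
    rw [hc2, Complex.mul_im, Complex.exp_im, Complex.exp_re]
    simp only [Complex.add_re, Complex.add_im, Complex.ofReal_re, Complex.ofReal_im,
      Complex.mul_re, Complex.mul_im, Complex.I_re, Complex.I_im, mul_zero, zero_mul,
      mul_one, sub_zero, add_zero, zero_add, zero_sub, neg_zero]
    ring

lemma rpow_gauss {L : ℝ} (hL : 0 < L) (b : ℝ) :
    IntegrableOn (fun x => x ^ b * Real.exp (-(Real.log x)^2/(2*L))) (Set.Ioi (0:ℝ)) ∧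
    ∫ x in Set.Ioi (0:ℝ), x ^ b * Real.exp (-(Real.log x)^2/(2*L))
      = Real.sqrt (2*Real.pi*L) * Real.exp ((b+1)^2*L/2) := by
  set g : ℝ → ℝ := fun x => x ^ b * Real.exp (-(Real.log x)^2/(2*L)) with hg
  have hfun : ∀ t : ℝ, Real.exp t * g (Real.exp t) = Real.exp ((b+1)*t - t^2/(2*L)) := by
    intro t
    rw [hg]
    simp only [Real.log_exp]
    rw [← Real.exp_mul, ← Real.exp_add, ← Real.exp_add]
    congr 1
    ring
  refine ⟨?_, ?_⟩
  · rw [(subst_exp_int g).1]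
    exact (gauss_real hL (b+1)).1.congr (Filter.Eventually.of_forall fun t => (hfun t).symm)
  · rw [(subst_exp_int g).2, show (fun t => Real.exp t * g (Real.exp t))
      = fun t => Real.exp ((b+1)*t - t^2/(2*L)) from funext hfun]
    exact (gauss_real hL (b+1)).2

lemma rpow_gauss_sin {L : ℝ} (hL : 0 < L) (b ω : ℝ) :
    IntegrableOn (fun x => x ^ b * Real.exp (-(Real.log x)^2/(2*L)) * Real.sin (ω * Real.log x))
      (Set.Ioi (0:ℝ)) ∧
    ∫ x in Set.Ioi (0:ℝ), x ^ b * Real.exp (-(Real.log x)^2/(2*L)) * Real.sin (ω * Real.log x)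
      = Real.sqrt (2*Real.pi*L) * Real.exp (((b+1)^2-ω^2)*L/2) * Real.sin ((b+1)*ω*L) := by
  set g : ℝ → ℝ :=
    fun x => x ^ b * Real.exp (-(Real.log x)^2/(2*L)) * Real.sin (ω * Real.log x) with hg
  have hfun : ∀ t : ℝ, Real.exp t * g (Real.exp t)
      = Real.exp ((b+1)*t - t^2/(2*L)) * Real.sin (ω*t) := by
    intro t
    rw [hg]
    simp only [Real.log_exp]
    rw [show Real.exp t * (Real.exp t ^ b * Real.exp (-t^2/(2*L)) * Real.sin (ω*t))
      = (Real.exp t * Real.exp t ^ b * Real.exp (-t^2/(2*L))) * Real.sin (ω*t) by ring]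
    rw [← Real.exp_mul, ← Real.exp_add, ← Real.exp_add]
    congr 2
    ring
  refine ⟨?_, ?_⟩
  · rw [(subst_exp_int g).1]
    exact (gauss_sin hL (b+1) ω).1.congr (Filter.Eventually.of_forall fun t => (hfun t).symm)
  · rw [(subst_exp_int g).2, show (fun t => Real.exp t * g (Real.exp t))
      = fun t => Real.exp ((b+1)*t - t^2/(2*L)) * Real.sin (ω*t) from funext hfun]
    exact (gauss_sin hL (b+1) ω).2

lemma withDensity_moment (v : ℝ → ℝ) (hv : Measurable v)
    (hv0 : ∀ x ∈ Set.Ioi (0:ℝ), 0 ≤ v x) (n : ℕ)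
    (hint : IntegrableOn (fun x => x^n * v x) (Set.Ioi (0:ℝ))) :
    Integrable (fun x => x^n)
        ((volume.restrict (Set.Ioi (0:ℝ))).withDensity fun x => ENNReal.ofReal (v x)) ∧
    ∫ x, x^n ∂((volume.restrict (Set.Ioi (0:ℝ))).withDensity fun x => ENNReal.ofReal (v x))
      = ∫ x in Set.Ioi (0:ℝ), x^n * v x := by
  constructor
  · rw [integrable_withDensity_iff hv.ennreal_ofReal
      (Filter.Eventually.of_forall fun x => ENNReal.ofReal_lt_top)]
    refine hint.congr ?_
    rw [Filter.EventuallyEq, ae_restrict_iff' measurableSet_Ioi]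
    exact Filter.Eventually.of_forall fun x hx => by
      rw [ENNReal.toReal_ofReal (hv0 x hx)]
  · have hco : (fun x => ENNReal.ofReal (v x))
        = fun x => ((v x).toNNReal : ENNReal) := rfl
    rw [hco, integral_withDensity_eq_integral_smul (f := fun x => (v x).toNNReal)
      (by exact measurable_real_toNNReal.comp hv)]
    refine setIntegral_congr_fun measurableSet_Ioi fun x hx => ?_
    simp only [NNReal.smul_def, smul_eq_mul]
    rw [Real.coe_toNNReal _ (hv0 x hx), mul_comm]

lemma vdens_meas (A L : ℝ) :
    Measurable fun x : ℝ => A * (x ^ (-(1/2) : ℝ) * Real.exp (-(Real.log x)^2 / (2*L))) := by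
  measurability

theorem qmoment_sequence_indeterminate (q : ℝ) (hq0 : 0 < q) (hq1 : q < 1) :
    ∃ μ ν : Measure ℝ,
      μ = (volume.restrict (Set.Ioi (0 : ℝ))).withDensity
            (fun x => ENNReal.ofReal (vDensity q 1 x)) ∧
      IsStieltjesRepr μ (fun n => q ^ (-((n : ℝ) * (n + 1) / 2))) ∧
      IsStieltjesRepr ν (fun n => q ^ (-((n : ℝ) * (n + 1) / 2))) ∧
      μ ≠ ν := by
  -- basic setup
  set L : ℝ := -Real.log q with hLdef
  have hL : 0 < L := by
    have := Real.log_neg hq0 hq1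
    simp [hLdef]; linarith
  have hlog : Real.log (1 / q ^ (1:ℝ)) = L := by
    rw [Real.rpow_one, one_div, Real.log_inv, hLdef]
  have hLq : Real.log q = -L := by rw [hLdef]; ring
  set A : ℝ := q ^ ((1:ℝ)/8) / Real.sqrt (2*Real.pi*L) with hA
  have hsqrt_pos : 0 < Real.sqrt (2*Real.pi*L) := Real.sqrt_pos.mpr (by positivity)
  have hApos : 0 < A := by rw [hA]; positivity
  have hv_eq : ∀ x, vDensity q 1 x
      = A * (x ^ (-(1/2) : ℝ) * Real.exp (-(Real.log x)^2 / (2*L))) := by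
    intro x
    unfold vDensity
    rw [show ((1:ℝ)/8) = (1:ℝ)/8 from rfl] at *
    rw [hlog, hA]
    ring
  set v : ℝ → ℝ := vDensity q 1 with hv
  have hv_meas : Measurable v := by
    rw [show v = fun x => A * (x ^ (-(1/2) : ℝ) * Real.exp (-(Real.log x)^2 / (2*L)))
      from funext hv_eq]
    exact vdens_meas A L
  have hv_pos : ∀ x ∈ Set.Ioi (0:ℝ), 0 < v x := by
    intro x hx
    have hx0 : (0:ℝ) < x := hx
    rw [hv_eq x]
    positivity
  have hv_nonneg : ∀ x ∈ Set.Ioi (0:ℝ), 0 ≤ v x := fun x hx => (hv_pos x hx).le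
  set ω : ℝ := 2*Real.pi/L with hω
  have hωpos : 0 < ω := by rw [hω]; positivity
  set w : ℝ → ℝ := fun x => v x * (1 + Real.sin (ω * Real.log x)) with hw
  have hw_meas : Measurable w := by
    rw [hw]
    exact hv_meas.mul (measurable_const.add
      (Real.measurable_sin.comp (Real.measurable_log.const_mul ω)))
  have hw_nonneg : ∀ x ∈ Set.Ioi (0:ℝ), 0 ≤ w x := by
    intro x hx
    rw [hw]
    have h1 : -1 ≤ Real.sin (ω * Real.log x) := Real.neg_one_le_sin _
    exact mul_nonneg (hv_nonneg x hx) (by linarith)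
  -- moments of v
  have key_v : ∀ n : ℕ, IntegrableOn (fun x => x^n * v x) (Set.Ioi (0:ℝ)) ∧
      ∫ x in Set.Ioi (0:ℝ), x^n * v x = q ^ (-((n : ℝ) * ((n:ℝ) + 1) / 2)) := by
    intro n
    set b : ℝ := (n:ℝ) - 1/2 with hb
    have heq : Set.EqOn (fun x => A * (x ^ b * Real.exp (-(Real.log x)^2/(2*L))))
        (fun x => x^n * v x) (Set.Ioi (0:ℝ)) := by
      intro x hx
      have hx0 : (0:ℝ) < x := hx
      simp only
      rw [hv_eq x, hb,
        show (n:ℝ) - 1/2 = (n:ℝ) + (-(1/2)) by ring,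
        Real.rpow_add hx0, Real.rpow_natCast]
      ring
    constructor
    · exact IntegrableOn.congr_fun ((rpow_gauss hL b).1.const_mul A) heq measurableSet_Ioi
    · rw [← setIntegral_congr_fun measurableSet_Ioi heq, integral_const_mul,
        (rpow_gauss hL b).2]
      have hE : Real.exp ((b+1)^2*L/2) = q ^ (-((b+1)^2/2)) := by
        rw [Real.rpow_def_of_pos hq0, hLq]
        congr 1
        ring
      have hA2 : A * (Real.sqrt (2*Real.pi*L) * (q ^ (-((b+1)^2/2)) : ℝ))
          = q^((1:ℝ)/8) * q ^ (-((b+1)^2/2)) := by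
        rw [hA]
        field_simp
      rw [hE, hA2, ← Real.rpow_add hq0]
      congr 1
      rw [hb]
      ring
  -- sin moments vanish
  have key_sin : ∀ n : ℕ,
      IntegrableOn (fun x => x^n * v x * Real.sin (ω * Real.log x)) (Set.Ioi (0:ℝ)) ∧
      ∫ x in Set.Ioi (0:ℝ), x^n * v x * Real.sin (ω * Real.log x) = 0 := by
    intro n
    set b : ℝ := (n:ℝ) - 1/2 with hb
    have heq : Set.EqOn
        (fun x => A * (x ^ b * Real.exp (-(Real.log x)^2/(2*L)) * Real.sin (ω * Real.log x)))
        (fun x => x^n * v x * Real.sin (ω * Real.log x)) (Set.Ioi (0:ℝ)) := by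
      intro x hx
      have hx0 : (0:ℝ) < x := hx
      simp only
      rw [hv_eq x, hb,
        show (n:ℝ) - 1/2 = (n:ℝ) + (-(1/2)) by ring,
        Real.rpow_add hx0, Real.rpow_natCast]
      ring
    constructor
    · exact IntegrableOn.congr_fun ((rpow_gauss_sin hL b ω).1.const_mul A) heq
        measurableSet_Ioi
    · rw [← setIntegral_congr_fun measurableSet_Ioi heq, integral_const_mul,
        (rpow_gauss_sin hL b ω).2]
      have hzero : Real.sin ((b+1)*ω*L) = 0 := by
        have harg : (b+1)*ω*L = ((2*(n:ℤ)+1 : ℤ) : ℝ) * Real.pi := by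
          rw [hb, hω]
          push_cast
          field_simp
          ring
        rw [harg, Real.sin_int_mul_pi]
      rw [hzero]
      ring
  -- moments of w
  have key_w : ∀ n : ℕ, IntegrableOn (fun x => x^n * w x) (Set.Ioi (0:ℝ)) ∧
      ∫ x in Set.Ioi (0:ℝ), x^n * w x = q ^ (-((n : ℝ) * ((n:ℝ) + 1) / 2)) := by
    intro n
    have hsum : ∀ x : ℝ, x^n * w x = x^n * v x + x^n * v x * Real.sin (ω * Real.log x) := by
      intro x
      rw [hw]
      ring
    constructor
    · exact ((key_v n).1.add (key_sin n).1).congr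
        (Filter.Eventually.of_forall fun x => (hsum x).symm)
    · rw [show (fun x => x^n * w x)
        = fun x => x^n * v x + x^n * v x * Real.sin (ω * Real.log x) from funext hsum]
      rw [integral_add (key_v n).1 (key_sin n).1, (key_v n).2, (key_sin n).2, add_zero]
  -- the two measures
  set μ : Measure ℝ := (volume.restrict (Set.Ioi (0:ℝ))).withDensity
      (fun x => ENNReal.ofReal (v x)) with hμ
  set ν : Measure ℝ := (volume.restrict (Set.Ioi (0:ℝ))).withDensity
      (fun x => ENNReal.ofReal (w x)) with hν
  have hIio : ∀ f : ℝ → ENNReal, ((volume.restrict (Set.Ioi (0:ℝ))).withDensity f)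
      (Set.Iio 0) = 0 := by
    intro f
    rw [withDensity_apply _ measurableSet_Iio,
      Measure.restrict_restrict measurableSet_Iio]
    simp [Set.Iio_inter_Ioi]
  refine ⟨μ, ν, rfl, ⟨hIio _, fun n => ?_⟩, ⟨hIio _, fun n => ?_⟩, ?_⟩
  · obtain ⟨h1, h2⟩ := withDensity_moment v hv_meas hv_nonneg n (key_v n).1
    exact ⟨h1, by rw [h2, (key_v n).2]⟩
  · obtain ⟨h1, h2⟩ := withDensity_moment w hw_meas hw_nonneg n (key_w n).1
    exact ⟨h1, by rw [h2, (key_w n).2]⟩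
  -- μ ≠ ν
  · set S : Set ℝ := Set.Ioo 1 (Real.exp (L/4)) with hS
    have hS_sub : S ⊆ Set.Ioi (0:ℝ) := fun x hx => lt_trans one_pos hx.1
    have hSapp : ∀ f : ℝ → ℝ, ((volume.restrict (Set.Ioi (0:ℝ))).withDensity
        (fun x => ENNReal.ofReal (f x))) S
        = ∫⁻ x in S, ENNReal.ofReal (f x) ∂volume := by
      intro f
      rw [withDensity_apply _ measurableSet_Ioo,
        Measure.restrict_restrict measurableSet_Ioo,
        Set.inter_eq_self_of_subset_left hS_sub]
    have hfin : ∫⁻ x in S, ENNReal.ofReal (v x) ∂volume ≠ ⊤ := by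
      have hint : IntegrableOn v S := by
        have h0 := (key_v 0).1
        have : IntegrableOn v (Set.Ioi (0:ℝ)) := by
          refine h0.congr (Filter.Eventually.of_forall fun x => ?_)
          simp
        exact this.mono_set hS_sub
      refine ne_top_of_le_ne_top hint.2.lt_top.ne (lintegral_mono fun x => ?_)
      exact Real.ofReal_le_enorm (v x)
    have hSne : volume S ≠ 0 := by
      rw [hS, Real.volume_Ioo]
      simp only [ne_eq, ENNReal.ofReal_eq_zero, not_le]
      have h1 : (0:ℝ) < L/4 := by positivity
      have h2 : (1:ℝ) < Real.exp (L/4) := by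
        calc (1:ℝ) = Real.exp 0 := Real.exp_zero.symm
        _ < Real.exp (L/4) := Real.exp_lt_exp.mpr h1
      linarith
    have hlt : μ S < ν S := by
      rw [hμ, hν, hSapp v, hSapp w]
      refine setLIntegral_strict_mono measurableSet_Ioo hSne hw_meas.ennreal_ofReal hfin ?_
      refine Filter.Eventually.of_forall fun x hx => ?_
      have hx0 : (0:ℝ) < x := lt_trans one_pos hx.1
      have hvp : 0 < v x := hv_pos x (Set.mem_Ioi.mpr hx0)
      have hlog1 : 0 < Real.log x := Real.log_pos hx.1
      have hlog2 : Real.log x < L/4 := (Real.log_lt_iff_lt_exp hx0).mpr hx.2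
      have hsin : 0 < Real.sin (ω * Real.log x) := by
        apply Real.sin_pos_of_pos_of_lt_pi (by positivity)
        have h3 : ω * Real.log x < ω * (L/4) := mul_lt_mul_of_pos_left hlog2 hωpos
        have hωL : ω * (L/4) = Real.pi/2 := by
          rw [hω]; field_simp; ring
        have hππ : Real.pi/2 < Real.pi := by linarith [Real.pi_pos]
        linarith
      have hvw : v x < w x := by
        have h4 : v x * 1 < v x * (1 + Real.sin (ω * Real.log x)) :=
          mul_lt_mul_of_pos_left (by linarith) hvp
        calc v x = v x * 1 := (mul_one _).symm
        _ < v x * (1 + Real.sin (ω * Real.log x)) := h4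
        _ = w x := rfl
      exact (ENNReal.ofReal_lt_ofReal_iff (hvp.trans hvw)).mpr hvw
    have hne : μ S ≠ ν S := ne_of_lt hlt
    exact fun h => hne (by rw [h])
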